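/- Define α : D → ℝ on the dyadic rationals D = {k/2ⁿ : n ≥ 0, 0 ≤ k ≤ 2ⁿ} ⊂ [0,1] recursively by α(0) = α(1) = 0, α(1/2) = 1, and for n ≥ 2 and 1 ≤ k ≤ 2^{n−2}: α((4k−3)/2ⁿ) = (θ(n)/4)α(4k/2ⁿ) + ((1−θ(n))/2)α((4k−2)/2ⁿ) + ((2+θ(n))/4)α((4k−4)/2ⁿ), and α((4k−1)/2ⁿ) = (θ(n)/4)α((4k−4)/2ⁿ) + ((1−θ(n))/2)α((4k−2)/2ⁿ) + ((2+θ(n))/4)α(4k/2ⁿ), where θ : ℤ_{≥2} → ℝ_{>0} with ∑ θ(n) < ∞. Let f_n : [0,1] → ℝ be the piecewise-linear interpolation of α on the grid D_n = {k/2ⁿ}. Then for all n ≥ 1: sup_{x∈[0,1]} |f_{n+1}(x) − f_n(x)| = (θ(n+1)/2) sup_{x∈[0,1]} |f_n(x) − f_{n−1}(x)|. Consequently f_n converges uniformly on [0,1] to a continuous limit f with f(x) = α(x) for all x ∈ D. -/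

import Mathlib

open Filter

noncomputable def dyadicInterp (a : ℕ → ℕ → ℝ) (n : ℕ) (x : ℝ) : ℝ :=
  (1 - ((2 ^ n : ℝ) * x - ⌊(2 ^ n : ℝ) * x⌋)) * a n (⌊(2 ^ n : ℝ) * x⌋.toNat) +
    ((2 ^ n : ℝ) * x - ⌊(2 ^ n : ℝ) * x⌋) * a n (⌊(2 ^ n : ℝ) * x⌋.toNat + 1)

namespace Stmt17Aux

/-- midpoint deviation -/
noncomputable def dd (a : ℕ → ℕ → ℝ) (n j : ℕ) : ℝ :=
  a (n+1) (2*j+1) - (a n j + a n (j+1))/2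

lemma interp_eval (a : ℕ → ℕ → ℝ) (n j : ℕ) (x : ℝ)
    (hj : ⌊(2^n : ℝ) * x⌋ = (j : ℤ)) :
    dyadicInterp a n x =
      (1 - ((2^n:ℝ)*x - j)) * a n j + ((2^n:ℝ)*x - j) * a n (j+1) := by
  simp [dyadicInterp, hj]

lemma interp_grid (a : ℕ → ℕ → ℝ) (n k : ℕ) :
    dyadicInterp a n ((k:ℝ)/2^n) = a n k := by
  have h2 : (2:ℝ)^n ≠ 0 := by positivity
  have hx : (2^n : ℝ) * ((k:ℝ)/2^n) = (k:ℝ) := by field_simp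
  have hj : ⌊(2^n : ℝ) * ((k:ℝ)/2^n)⌋ = (k : ℤ) := by
    rw [hx]; exact_mod_cast Int.floor_natCast k
  rw [interp_eval a n k _ hj, hx]
  ring

lemma a_pow (a : ℕ → ℕ → ℝ) (hcons : ∀ n k, a (n + 1) (2 * k) = a n k)
    (n j k : ℕ) : a (n+j) (2^j * k) = a n k := by
  induction j with
  | zero => simp
  | succ m ih =>
      have : (2:ℕ)^(m+1) * k = 2 * (2^m * k) := by ring
      rw [show n + (m+1) = (n+m) + 1 from rfl, this, hcons, ih]

lemma interp_formula (a : ℕ → ℕ → ℝ) (n : ℕ) (x : ℝ) (hx : x ∈ Set.Icc (0:ℝ) 1) :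
    dyadicInterp a n x =
      a n 0 + ∑ k ∈ Finset.range (2^n),
        (a n (k+1) - a n k) * min 1 (max 0 ((2^n:ℝ)*x - k)) := by
  obtain ⟨hx0, hx1⟩ := hx
  set y : ℝ := (2^n:ℝ) * x with hy
  have hy0 : 0 ≤ y := by positivity
  have hyN : y ≤ (2^n : ℝ) := by
    calc y ≤ (2^n:ℝ) * 1 := by apply mul_le_mul_of_nonneg_left hx1; positivity
    _ = _ := by ring
  have hJ0 : 0 ≤ ⌊y⌋ := Int.floor_nonneg.mpr hy0
  set j : ℕ := ⌊y⌋.toNat with hjdef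
  have hfloorj : ⌊y⌋ = (j:ℤ) := by rw [hjdef, Int.toNat_of_nonneg hJ0]
  have hjc : (j:ℝ) = (⌊y⌋ : ℝ) := by exact_mod_cast congrArg (fun z : ℤ => (z:ℝ)) hfloorj.symm
  have hjle : (j:ℝ) ≤ y := by rw [hjc]; exact Int.floor_le y
  have hylt : y < (j:ℝ) + 1 := by rw [hjc]; exact Int.lt_floor_add_one y
  have hjN : j ≤ 2^n := by
    by_contra h
    push_neg at h
    have : (2^n:ℝ) + 1 ≤ (j:ℝ) := by exact_mod_cast h
    linarith
  have hsum : ∑ k ∈ Finset.range (2^n),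
      (a n (k+1) - a n k) * min 1 (max 0 (y - k)) =
      (∑ k ∈ Finset.range j, (a n (k+1) - a n k)) +
      ∑ k ∈ Finset.Ico j (2^n), (a n (k+1) - a n k) * min 1 (max 0 (y - k)) := by
    rw [Finset.range_eq_Ico, ← Finset.sum_Ico_consecutive _ (Nat.zero_le j) hjN,
      ← Finset.range_eq_Ico]
    congr 1
    apply Finset.sum_congr rfl
    intro k hk
    have hk' : k < j := Finset.mem_range.mp hk
    have h1 : (1:ℝ) ≤ y - k := by
      have : (k:ℝ) + 1 ≤ (j:ℝ) := by exact_mod_cast hk'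
      linarith
    rw [max_eq_right (by linarith), min_eq_left h1, mul_one]
  have htel : ∑ k ∈ Finset.range j, (a n (k+1) - a n k) = a n j - a n 0 :=
    Finset.sum_range_sub (a n) j
  rcases eq_or_lt_of_le hjN with hje | hjlt
  · -- j = 2^n, so y = 2^n, t = 0
    have hyj : y = (j:ℝ) := le_antisymm (by rw [hje]; exact_mod_cast hyN) hjle
    have : Finset.Ico j (2^n) = ∅ := by rw [hje]; simp
    rw [hsum, htel, this, Finset.sum_empty, interp_eval a n j x (by rw [← hy]; exact hfloorj)]
    rw [← hy, hyj]
    ring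
  · have hIco : Finset.Ico j (2^n) = insert j (Finset.Ico (j+1) (2^n)) := by
      ext m
      simp only [Finset.mem_Ico, Finset.mem_insert]
      omega
    have hrest : ∀ k ∈ Finset.Ico (j+1) (2^n),
        (a n (k+1) - a n k) * min 1 (max 0 (y - k)) = 0 := by
      intro k hk
      have hk' : j + 1 ≤ k := (Finset.mem_Ico.mp hk).1
      have : y - (k:ℝ) ≤ 0 := by
        have : (j:ℝ) + 1 ≤ (k:ℝ) := by exact_mod_cast hk'
        linarith
      rw [max_eq_left this, min_eq_right (by norm_num), mul_zero]
    have hmid : min 1 (max 0 (y - j)) = y - j := by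
      rw [max_eq_right (by linarith), min_eq_right (by linarith)]
    rw [hsum, htel, hIco, Finset.sum_insert (by simp), Finset.sum_eq_zero hrest,
      interp_eval a n j x (by rw [← hy]; exact hfloorj), hmid]
    rw [← hy]
    ring

lemma interp_continuousOn (a : ℕ → ℕ → ℝ) (n : ℕ) :
    ContinuousOn (dyadicInterp a n) (Set.Icc (0:ℝ) 1) := by
  apply ContinuousOn.congr (f := fun x => a n 0 + ∑ k ∈ Finset.range (2^n),
        (a n (k+1) - a n k) * min 1 (max 0 ((2^n:ℝ)*x - k)))
  · apply ContinuousOn.add continuousOn_const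
    apply continuousOn_finset_sum
    intro k _
    apply ContinuousOn.mul continuousOn_const
    apply Continuous.continuousOn
    exact continuous_const.min ((continuous_const.max (by continuity)))
  · intro x hx
    exact interp_formula a n x hx

lemma diff_bound (a : ℕ → ℕ → ℝ) (hcons : ∀ n k, a (n + 1) (2 * k) = a n k)
    (n : ℕ) (x : ℝ) (hx : x ∈ Set.Icc (0:ℝ) 1) :
    ∃ j, j < 2^n ∧ ∃ c ∈ Set.Icc (0:ℝ) 1,
      dyadicInterp a (n+1) x - dyadicInterp a n x = c * dd a n j := by
  obtain ⟨hx0, hx1⟩ := hx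
  set y : ℝ := (2^n:ℝ) * x with hy
  have hy0 : 0 ≤ y := by positivity
  have hyN : y ≤ (2^n : ℝ) := by
    calc y ≤ (2^n:ℝ) * 1 := by apply mul_le_mul_of_nonneg_left hx1; positivity
    _ = _ := by ring
  have hJ0 : 0 ≤ ⌊y⌋ := Int.floor_nonneg.mpr hy0
  set j : ℕ := ⌊y⌋.toNat with hjdef
  have hfloorj : ⌊y⌋ = (j:ℤ) := by rw [hjdef, Int.toNat_of_nonneg hJ0]
  have hjle : (j:ℝ) ≤ y := by
    have := Int.floor_le y; rw [hfloorj] at this; exact_mod_cast this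
  have hylt : y < (j:ℝ) + 1 := by
    have := Int.lt_floor_add_one y; rw [hfloorj] at this; exact_mod_cast this
  have hjN : j ≤ 2^n := by
    by_contra h
    push_neg at h
    have : (2^n:ℝ) + 1 ≤ (j:ℝ) := by exact_mod_cast h
    linarith
  have h2y : (2^(n+1) : ℝ) * x = 2 * y := by rw [hy]; ring
  have hfn := interp_eval a n j x hfloorj
  rcases eq_or_lt_of_le hjN with hje | hjlt
  · -- x = 1 case : j = 2^n, y = j, diff = 0
    refine ⟨0, Nat.two_pow_pos n, 0, by norm_num, ?_⟩
    have hyj : y = (j:ℝ) := le_antisymm (by rw [hje]; exact_mod_cast hyN) hjle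
    have hf2 : ⌊(2^(n+1) : ℝ) * x⌋ = ((2*j : ℕ) : ℤ) := by
      rw [h2y, hyj]
      push_cast
      exact_mod_cast Int.floor_intCast (2*(j:ℤ))
    have hyj2 : (2:ℝ)^n * x = (j:ℝ) := by rw [← hy, hyj]
    rw [interp_eval a (n+1) (2*j) x hf2, hfn, hcons]
    push_cast
    linear_combination (2 * a (n+1) (2*j+1) - a n j - a n (j+1)) * hyj2
  · rcases lt_or_ge y ((j:ℝ) + 1/2) with hhalf | hhalf
    · -- lower half: floor(2y) = 2j
      refine ⟨j, hjlt, 2*(y - (j:ℝ)), ⟨by linarith, by linarith⟩, ?_⟩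
      have hf2 : ⌊(2^(n+1) : ℝ) * x⌋ = ((2*j : ℕ) : ℤ) := by
        rw [h2y]
        rw [Int.floor_eq_iff]
        constructor
        · push_cast; linarith
        · push_cast; linarith
      rw [interp_eval a (n+1) (2*j) x hf2, hfn, hcons, ← hy, dd]
      have h1 : a (n+1) (2*j+1+1) = a n (j+1) := by
        rw [show 2*j+1+1 = 2*(j+1) by ring, hcons]
      rw [show (2:ℕ)*j+1 = 2*j+1 from rfl]
      push_cast
      ring
    · -- upper half: floor(2y) = 2j+1
      refine ⟨j, hjlt, 2 - 2*(y - (j:ℝ)), ⟨by linarith, by linarith⟩, ?_⟩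
      have hf2 : ⌊(2^(n+1) : ℝ) * x⌋ = ((2*j+1 : ℕ) : ℤ) := by
        rw [h2y]
        rw [Int.floor_eq_iff]
        constructor
        · push_cast; linarith
        · push_cast; linarith
      rw [interp_eval a (n+1) (2*j+1) x hf2, hfn, ← hy, dd]
      have h1 : a (n+1) (2*j+1+1) = a n (j+1) := by
        rw [show 2*j+1+1 = 2*(j+1) by ring, hcons]
      rw [h1]
      push_cast
      ring

lemma diff_mid (a : ℕ → ℕ → ℝ) (n j : ℕ) :
    dyadicInterp a (n+1) ((2*(j:ℝ)+1)/2^(n+1)) - dyadicInterp a n ((2*(j:ℝ)+1)/2^(n+1)) =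
      dd a n j := by
  have hg : ((2*j+1 : ℕ) : ℝ)/2^(n+1) = (2*(j:ℝ)+1)/2^(n+1) := by push_cast; ring
  have h1 : dyadicInterp a (n+1) ((2*(j:ℝ)+1)/2^(n+1)) = a (n+1) (2*j+1) := by
    rw [← hg, interp_grid]
  have hyval : (2^n : ℝ) * ((2*(j:ℝ)+1)/2^(n+1)) = (j:ℝ) + 1/2 := by
    rw [pow_succ]
    field_simp
  have hfl : ⌊(2^n : ℝ) * ((2*(j:ℝ)+1)/2^(n+1))⌋ = (j:ℤ) := by
    rw [hyval, Int.floor_eq_iff]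
    constructor
    · push_cast; linarith
    · push_cast; linarith
  rw [h1, interp_eval a n j _ hfl, hyval, dd]
  ring

lemma sup_diff (a : ℕ → ℕ → ℝ) (hcons : ∀ n k, a (n + 1) (2 * k) = a n k) (n : ℕ) :
    (⨆ x : Set.Icc (0:ℝ) 1, |dyadicInterp a (n+1) x - dyadicInterp a n x|) =
      (Finset.range (2^n)).sup'
        (Finset.nonempty_range_iff.mpr (Nat.two_pow_pos n).ne')
        (fun j => |dd a n j|) := by
  have hne : (Finset.range (2^n)).Nonempty :=
    Finset.nonempty_range_iff.mpr (Nat.two_pow_pos n).ne'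
  set M := (Finset.range (2^n)).sup' hne (fun j => |dd a n j|) with hM
  have hub : ∀ x : Set.Icc (0:ℝ) 1,
      |dyadicInterp a (n+1) x - dyadicInterp a n x| ≤ M := by
    rintro ⟨x, hx⟩
    obtain ⟨j, hj, c, hc, heq⟩ := diff_bound a hcons n x hx
    calc |dyadicInterp a (n+1) x - dyadicInterp a n x| = |c * dd a n j| := by rw [heq]
    _ = c * |dd a n j| := by rw [abs_mul, abs_of_nonneg hc.1]
    _ ≤ 1 * |dd a n j| := by
        apply mul_le_mul_of_nonneg_right hc.2 (abs_nonneg _)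
    _ = |dd a n j| := one_mul _
    _ ≤ M := by rw [hM]; exact Finset.le_sup' (fun j => |dd a n j|) (Finset.mem_range.mpr hj)
  have hbdd : BddAbove (Set.range fun x : Set.Icc (0:ℝ) 1 =>
      |dyadicInterp a (n+1) x - dyadicInterp a n x|) := by
    refine ⟨M, ?_⟩
    rintro z ⟨x, rfl⟩
    exact hub x
  apply le_antisymm
  · exact ciSup_le hub
  · apply Finset.sup'_le
    intro j hj
    have hjlt : j < 2^n := Finset.mem_range.mp hj
    have hxmem : (2*(j:ℝ)+1)/2^(n+1) ∈ Set.Icc (0:ℝ) 1 := by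
      constructor
      · positivity
      · rw [div_le_one (by positivity)]
        have : (j:ℝ) + 1 ≤ (2^n : ℝ) := by exact_mod_cast hjlt
        rw [pow_succ]
        linarith
    have := le_ciSup (f := fun x : Set.Icc (0:ℝ) 1 =>
      |dyadicInterp a (n+1) x - dyadicInterp a n x|) hbdd ⟨_, hxmem⟩
    rwa [diff_mid a n j] at this

lemma dd_rec (a : ℕ → ℕ → ℝ) (θ : ℕ → ℝ)
    (hcons : ∀ n k, a (n + 1) (2 * k) = a n k)
    (hrec1 : ∀ m k, 1 ≤ k → k ≤ 2 ^ m →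
      a (m + 2) (4 * k - 3) =
        θ (m + 2) / 4 * a (m + 2) (4 * k) + (1 - θ (m + 2)) / 2 * a (m + 2) (4 * k - 2) +
          (2 + θ (m + 2)) / 4 * a (m + 2) (4 * k - 4))
    (hrec2 : ∀ m k, 1 ≤ k → k ≤ 2 ^ m →
      a (m + 2) (4 * k - 1) =
        θ (m + 2) / 4 * a (m + 2) (4 * k - 4) + (1 - θ (m + 2)) / 2 * a (m + 2) (4 * k - 2) +
          (2 + θ (m + 2)) / 4 * a (m + 2) (4 * k))
    (m j : ℕ) (hj : j < 2^(m+1)) :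
    dd a (m+1) j = -(θ (m+2)/2) * dd a m (j/2) := by
  have e0 : ∀ i, a (m+2) (4*i) = a m i := by
    intro i
    rw [show 4*i = 2*(2*i) by ring, hcons, hcons]
  have e1 : ∀ i, a (m+2) (4*i+4) = a m (i+1) := by
    intro i
    rw [show 4*i+4 = 2*(2*(i+1)) by ring, hcons, hcons]
  have e2 : ∀ i, a (m+2) (4*i+2) = a (m+1) (2*i+1) := by
    intro i
    rw [show 4*i+2 = 2*(2*i+1) by ring, hcons]
  rcases Nat.even_or_odd j with ⟨i, hi⟩ | ⟨i, hi⟩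
  · -- j = 2i
    have hj2 : j = 2*i := by omega
    have hilt : i < 2^m := by
      have : 2^(m+1) = 2*2^m := by ring
      omega
    have h1 := hrec1 m (i+1) (by omega) (by omega)
    rw [show 4*(i+1)-3 = 4*i+1 by omega, show 4*(i+1)-2 = 4*i+2 by omega,
      show 4*(i+1)-4 = 4*i by omega, show 4*(i+1) = 4*i+4 by omega,
      e0, e1, e2] at h1
    have hdiv : j/2 = i := by omega
    rw [hj2, show 2*i/2 = i by omega, dd, dd, show (m+1)+1 = m+2 from rfl,
      show 2*(2*i)+1 = 4*i+1 by ring, h1, hcons]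
    ring
  · -- j = 2i+1
    have hj2 : j = 2*i+1 := hi
    have hilt : i < 2^m := by
      have : 2^(m+1) = 2*2^m := by ring
      omega
    have h1 := hrec2 m (i+1) (by omega) (by omega)
    rw [show 4*(i+1)-1 = 4*i+3 by omega, show 4*(i+1)-2 = 4*i+2 by omega,
      show 4*(i+1)-4 = 4*i by omega, show 4*(i+1) = 4*i+4 by omega,
      e0, e1, e2] at h1
    have hdiv : j/2 = i := by omega
    have hc1 : a (m+1) (2*i+1+1) = a m (i+1) := by
      rw [show 2*i+1+1 = 2*(i+1) by ring, hcons]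
    rw [hj2, show (2*i+1)/2 = i by omega, dd, dd, show (m+1)+1 = m+2 from rfl,
      show 2*(2*i+1)+1 = 4*i+3 by ring, h1, hc1]
    ring

lemma M_rec (a : ℕ → ℕ → ℝ) (θ : ℕ → ℝ)
    (hcons : ∀ n k, a (n + 1) (2 * k) = a n k)
    (hrec1 : ∀ m k, 1 ≤ k → k ≤ 2 ^ m →
      a (m + 2) (4 * k - 3) =
        θ (m + 2) / 4 * a (m + 2) (4 * k) + (1 - θ (m + 2)) / 2 * a (m + 2) (4 * k - 2) +
          (2 + θ (m + 2)) / 4 * a (m + 2) (4 * k - 4))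
    (hrec2 : ∀ m k, 1 ≤ k → k ≤ 2 ^ m →
      a (m + 2) (4 * k - 1) =
        θ (m + 2) / 4 * a (m + 2) (4 * k - 4) + (1 - θ (m + 2)) / 2 * a (m + 2) (4 * k - 2) +
          (2 + θ (m + 2)) / 4 * a (m + 2) (4 * k))
    (m : ℕ) (hθ : 0 < θ (m+2)) :
    (Finset.range (2^(m+1))).sup'
        (Finset.nonempty_range_iff.mpr (Nat.two_pow_pos (m+1)).ne')
        (fun j => |dd a (m+1) j|) =
      θ (m+2)/2 * (Finset.range (2^m)).sup'
        (Finset.nonempty_range_iff.mpr (Nat.two_pow_pos m).ne')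
        (fun j => |dd a m j|) := by
  have hpow : (2:ℕ)^(m+1) = 2*2^m := by rw [pow_succ]; ring
  have habs : ∀ j, j < 2^(m+1) → |dd a (m+1) j| = θ (m+2)/2 * |dd a m (j/2)| := by
    intro j hj
    rw [dd_rec a θ hcons hrec1 hrec2 m j hj, abs_mul, abs_neg,
      abs_of_pos (by positivity)]
  apply le_antisymm
  · apply Finset.sup'_le
    intro j hj
    have hjlt := Finset.mem_range.mp hj
    rw [habs j hjlt]
    have hjd : j/2 < 2^m := by omega
    exact mul_le_mul_of_nonneg_left
      (Finset.le_sup' (fun j => |dd a m j|) (Finset.mem_range.mpr hjd))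
      (by positivity)
  · obtain ⟨i, hi, hieq⟩ := Finset.exists_mem_eq_sup'
      (Finset.nonempty_range_iff.mpr (Nat.two_pow_pos m).ne') (fun j => |dd a m j|)
    rw [hieq]
    have hilt := Finset.mem_range.mp hi
    have h2i : 2*i < 2^(m+1) := by omega
    calc θ (m+2)/2 * |dd a m i| = |dd a (m+1) (2*i)| := by
          rw [habs (2*i) h2i, show 2*i/2 = i by omega]
    _ ≤ _ := Finset.le_sup' (fun j => |dd a (m+1) j|) (Finset.mem_range.mpr h2i)

end Stmt17Aux

open Stmt17Aux

theorem stmt17 (θ : ℕ → ℝ) (hθpos : ∀ n, 2 ≤ n → 0 < θ n) (hθsum : Summable θ)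
    (a : ℕ → ℕ → ℝ)
    (hbase0 : a 0 0 = 0) (hbase1 : a 0 1 = 0) (hhalf : a 1 1 = 1)
    (hcons : ∀ n k, a (n + 1) (2 * k) = a n k)
    (hrec1 : ∀ m k, 1 ≤ k → k ≤ 2 ^ m →
      a (m + 2) (4 * k - 3) =
        θ (m + 2) / 4 * a (m + 2) (4 * k) + (1 - θ (m + 2)) / 2 * a (m + 2) (4 * k - 2) +
          (2 + θ (m + 2)) / 4 * a (m + 2) (4 * k - 4))
    (hrec2 : ∀ m k, 1 ≤ k → k ≤ 2 ^ m →
      a (m + 2) (4 * k - 1) =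
        θ (m + 2) / 4 * a (m + 2) (4 * k - 4) + (1 - θ (m + 2)) / 2 * a (m + 2) (4 * k - 2) +
          (2 + θ (m + 2)) / 4 * a (m + 2) (4 * k)) :
    (∀ n, 1 ≤ n →
      (⨆ x : Set.Icc (0:ℝ) 1, |dyadicInterp a (n + 1) x - dyadicInterp a n x|) =
        θ (n + 1) / 2 *
          ⨆ x : Set.Icc (0:ℝ) 1, |dyadicInterp a n x - dyadicInterp a (n - 1) x|) ∧
    ∃ f : ℝ → ℝ, ContinuousOn f (Set.Icc 0 1) ∧
      TendstoUniformlyOn (fun n => dyadicInterp a n) f atTop (Set.Icc 0 1) ∧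
      ∀ n k : ℕ, k ≤ 2 ^ n → f ((k : ℝ) / 2 ^ n) = a n k := by
  set Mf : ℕ → ℝ := fun n => (Finset.range (2^n)).sup'
      (Finset.nonempty_range_iff.mpr (Nat.two_pow_pos n).ne')
      (fun j => |dd a n j|) with hMf
  have hMrec : ∀ m, Mf (m+1) = θ (m+2)/2 * Mf m := fun m =>
    M_rec a θ hcons hrec1 hrec2 m (hθpos (m+2) (by omega))
  have hMnonneg : ∀ j, 0 ≤ Mf j := fun j =>
    le_trans (abs_nonneg (dd a j 0))
      (Finset.le_sup' (fun i => |dd a j i|) (Finset.mem_range.mpr (Nat.two_pow_pos j)))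
  constructor
  · intro n hn
    obtain ⟨m, rfl⟩ : ∃ m, n = m + 1 := ⟨n-1, by omega⟩
    simp only [Nat.add_sub_cancel]
    rw [sup_diff a hcons (m+1), sup_diff a hcons m]
    exact hMrec m
  · -- uniform convergence part
    have hbound : ∀ (j : ℕ) (x : ℝ), x ∈ Set.Icc (0:ℝ) 1 →
        ‖dyadicInterp a (j+1) x - dyadicInterp a j x‖ ≤ Mf j := by
      intro j x hx
      obtain ⟨i, hi, c, hc, heq⟩ := diff_bound a hcons j x hx
      rw [Real.norm_eq_abs, heq, abs_mul, abs_of_nonneg hc.1]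
      calc c * |dd a j i| ≤ 1 * |dd a j i| :=
            mul_le_mul_of_nonneg_right hc.2 (abs_nonneg _)
      _ = |dd a j i| := one_mul _
      _ ≤ Mf j := Finset.le_sup' (fun i => |dd a j i|) (Finset.mem_range.mpr hi)
    -- summability of Mf
    have hθ0 : Filter.Tendsto θ atTop (nhds 0) := hθsum.tendsto_atTop_zero
    obtain ⟨N, hN⟩ := Filter.eventually_atTop.mp (hθ0.eventually_lt_const one_pos)
    have hgeom : ∀ i, Mf (N + i) ≤ Mf N * (1/2)^i := by
      intro i
      induction i with
      | zero => simp
      | succ i ih =>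
          have hθlt : θ (N + i + 2) < 1 := hN (N+i+2) (by omega)
          have hθgt : 0 < θ (N + i + 2) := hθpos _ (by omega)
          calc Mf (N + (i+1)) = θ (N + i + 2)/2 * Mf (N + i) := by
                rw [show N + (i+1) = (N+i) + 1 by ring, hMrec (N+i)]
          _ ≤ (1/2) * (Mf N * (1/2)^i) := by
              apply mul_le_mul (by linarith) ih (hMnonneg _) (by norm_num)
          _ = Mf N * (1/2)^(i+1) := by ring
    have hMsum : Summable Mf := by
      rw [← summable_nat_add_iff N]
      apply Summable.of_nonneg_of_le (fun i => hMnonneg _)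
        (fun i => by rw [Nat.add_comm]; exact hgeom i)
        (Summable.mul_left (Mf N) (summable_geometric_of_lt_one (by norm_num) (by norm_num)))
    have huC := tendstoUniformlyOn_tsum_nat (f := fun j x =>
        dyadicInterp a (j+1) x - dyadicInterp a j x) hMsum (s := Set.Icc 0 1) hbound
    set F : ℝ → ℝ := fun x =>
      dyadicInterp a 0 x + ∑' j, (dyadicInterp a (j+1) x - dyadicInterp a j x) with hF
    have htel : ∀ (nn : ℕ) (x : ℝ), dyadicInterp a nn x =
        dyadicInterp a 0 x + ∑ j ∈ Finset.range nn,
          (dyadicInterp a (j+1) x - dyadicInterp a j x) := by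
      intro nn x
      rw [Finset.sum_range_sub (fun j => dyadicInterp a j x) nn]
      ring
    have huF : TendstoUniformlyOn (fun n => dyadicInterp a n) F atTop (Set.Icc 0 1) := by
      rw [Metric.tendstoUniformlyOn_iff]
      rw [Metric.tendstoUniformlyOn_iff] at huC
      intro ε hε
      filter_upwards [huC ε hε] with nn h x hx
      have h2 := h x hx
      rw [Real.dist_eq] at h2 ⊢
      rw [hF, htel nn x]
      convert h2 using 2
      ring
    refine ⟨F, ?_, huF, ?_⟩
    · apply huF.continuousOn
      exact Filter.Frequently.of_forall (fun n => interp_continuousOn a n)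
    · intro n k hk
      have hxmem : (k:ℝ)/2^n ∈ Set.Icc (0:ℝ) 1 := by
        constructor
        · positivity
        · rw [div_le_one (by positivity)]
          exact_mod_cast hk
      have hconst : ∀ m, dyadicInterp a (n+m) ((k:ℝ)/2^n) = a n k := by
        intro m
        have hx : (k:ℝ)/2^n = ((2^m * k : ℕ):ℝ)/2^(n+m) := by
          push_cast
          rw [pow_add]
          field_simp
        rw [hx, interp_grid, a_pow a hcons]
      have h1 : Filter.Tendsto (fun m => dyadicInterp a m ((k:ℝ)/2^n)) atTop
          (nhds (F ((k:ℝ)/2^n))) := huF.tendsto_at hxmem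
      have h2 : Filter.Tendsto (fun m => dyadicInterp a m ((k:ℝ)/2^n)) atTop
          (nhds (a n k)) := by
        apply Filter.Tendsto.congr' _ tendsto_const_nhds
        filter_upwards [Filter.eventually_ge_atTop n] with m hm
        obtain ⟨i, rfl⟩ := Nat.exists_eq_add_of_le hm
        exact (hconst i).symm
      exact tendsto_nhds_unique h1 h2
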